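/- Let m ≥ 1 be a natural number. The function Λ̄_m : ℂ^m → ℝ, which maps each tuple M = (a_0, …, a_{m−1}) ∈ ℂ^m to the maximum of the real parts of the roots of the polynomial λ^m − a_{m−1}λ^{m−1} − ⋯ − a_1λ − a_0, is continuous on ℂ^m. -/

import Mathlib

open Polynomial

/-- The characteristic polynomial `λ^m - a_{m-1} λ^{m-1} - ⋯ - a_1 λ - a_0`
associated to the tuple of coefficients `M = (a_0, …, a_{m-1}) ∈ ℂ^m`. -/
noncomputable def charPoly (m : ℕ) (M : Fin m → ℂ) : Polynomial ℂ :=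
  X ^ m - ∑ j : Fin m, C (M j) * X ^ (j : ℕ)

/-- `Λ̄_m(M)`: the maximum of the real parts of the roots of `charPoly m M`
(a well-defined real number when `m ≥ 1`, since then the polynomial has roots). -/
noncomputable def maxReRoots (m : ℕ) (M : Fin m → ℂ) : ℝ :=
  sSup (Complex.re '' {z : ℂ | z ∈ (charPoly m M).roots})

open Topology

lemma charPoly_monic (m : ℕ) (M : Fin m → ℂ) : (charPoly m M).Monic := by
  apply monic_X_pow_sub
  apply lt_of_le_of_lt (degree_sum_le _ _)
  apply Finset.sup_lt_iff (bot_lt_iff_ne_bot.2 (by simp)) |>.2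
  intro j _
  exact lt_of_le_of_lt (degree_C_mul_X_pow_le _ _) (by exact_mod_cast j.2)

lemma charPoly_natDegree (m : ℕ) (M : Fin m → ℂ) :
    (charPoly m M).natDegree = m := by
  have h : degree (∑ j : Fin m, C (M j) * X ^ (j : ℕ)) < degree ((X : ℂ[X]) ^ m) := by
    rw [degree_X_pow]
    apply lt_of_le_of_lt (degree_sum_le _ _)
    apply Finset.sup_lt_iff (bot_lt_iff_ne_bot.2 (by simp)) |>.2
    intro j _
    exact lt_of_le_of_lt (degree_C_mul_X_pow_le _ _) (by exact_mod_cast j.2)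
  have := degree_sub_eq_left_of_degree_lt h
  rw [degree_X_pow] at this
  exact natDegree_eq_of_degree_eq_some (by rw [charPoly, this])

lemma charPoly_coeff (m : ℕ) (M : Fin m → ℂ) (j : Fin m) :
    (charPoly m M).coeff j = -(M j) := by
  rw [charPoly, coeff_sub, coeff_X_pow, if_neg (Nat.ne_of_lt j.2),
    finset_sum_coeff]
  simp only [coeff_C_mul, coeff_X_pow]
  rw [Finset.sum_eq_single j]
  · simp
  · intro b _ hb
    rw [if_neg, mul_zero]
    exact fun h => hb (Fin.ext h.symm)
  · simp

/-- If `P` is monic of degree `m`, then `charPoly m (fun j => -(P.coeff j)) = P`. -/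
lemma charPoly_of_monic (m : ℕ) {P : ℂ[X]} (hP : P.Monic) (hd : P.natDegree = m) :
    charPoly m (fun j => -(P.coeff j)) = P := by
  ext k
  rcases lt_trichotomy k m with hk | hk | hk
  · rw [charPoly_coeff m _ ⟨k, hk⟩, neg_neg]
  · subst hk
    have h1 := (charPoly_monic k fun j => -(P.coeff j)).coeff_natDegree
    rw [charPoly_natDegree] at h1
    have h2 := hP.coeff_natDegree
    rw [hd] at h2
    rw [h1, h2]
  · rw [coeff_eq_zero_of_natDegree_lt (by rw [charPoly_natDegree]; exact hk),
      coeff_eq_zero_of_natDegree_lt (hd ▸ hk)]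

/-- The map sending roots to (negated) coefficients. -/
noncomputable def rootsToCoeffs (m : ℕ) (r : Fin m → ℂ) : Fin m → ℂ :=
  fun j => -((∏ i, (X - C (r i))).coeff j)

lemma prod_monic (m : ℕ) (r : Fin m → ℂ) : (∏ i, (X - C (r i))).Monic :=
  monic_prod_of_monic _ _ fun i _ => monic_X_sub_C (r i)

lemma prod_natDegree (m : ℕ) (r : Fin m → ℂ) : (∏ i, (X - C (r i))).natDegree = m := by
  rw [natDegree_prod _ _ fun i _ => X_sub_C_ne_zero (r i)]
  simp [natDegree_X_sub_C]

lemma charPoly_rootsToCoeffs (m : ℕ) (r : Fin m → ℂ) :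
    charPoly m (rootsToCoeffs m r) = ∏ i, (X - C (r i)) :=
  charPoly_of_monic m (prod_monic m r) (prod_natDegree m r)

lemma roots_prod_X_sub_C_fn (m : ℕ) (r : Fin m → ℂ) :
    (∏ i, (X - C (r i))).roots = Finset.univ.val.map r := by
  rw [Finset.prod_eq_multiset_prod]
  have : Multiset.map (fun i => X - C (r i)) Finset.univ.val
      = Multiset.map (fun a => X - C a) (Multiset.map r Finset.univ.val) := by
    rw [Multiset.map_map]; rfl
  rw [this, roots_multiset_prod_X_sub_C]

lemma rootsToCoeffs_surjective (m : ℕ) (hm : 1 ≤ m) :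
    Function.Surjective (rootsToCoeffs m) := by
  intro M
  set P := charPoly m M with hPdef
  have hP : P.Monic := charPoly_monic m M
  have hd : P.natDegree = m := charPoly_natDegree m M
  have hsplit : P = (P.roots.map fun a => X - C a).prod :=
    (IsAlgClosed.splits P).eq_prod_roots_of_monic hP
  have hcard : P.roots.card = m := by
    rw [← hd]
    exact (splits_iff_card_roots.1 (IsAlgClosed.splits P))
  set l := P.roots.toList with hl
  have hlen : l.length = m := by rw [hl, Multiset.length_toList, hcard]
  refine ⟨fun i => l.get (Fin.cast hlen.symm i), ?_⟩
  have hprod : (∏ i : Fin m, (X - C (l.get (Fin.cast hlen.symm i)))) = P := by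
    rw [show (∏ i : Fin m, ((X:ℂ[X]) - C (l.get (Fin.cast hlen.symm i))))
        = ∏ i : Fin l.length, ((X:ℂ[X]) - C (l.get i)) from
      Fintype.prod_equiv (finCongr hlen.symm) _ _ (fun i => rfl)]
    calc (∏ i : Fin l.length, ((X:ℂ[X]) - C (l.get i)))
        = (List.ofFn fun i => (X:ℂ[X]) - C (l.get i)).prod := List.prod_ofFn.symm
      _ = ((List.ofFn l.get).map fun a => (X:ℂ[X]) - C a).prod := by
          rw [List.map_ofFn]; rfl
      _ = (l.map fun a => (X:ℂ[X]) - C a).prod := by rw [List.ofFn_get]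
      _ = P := by
          rw [hsplit, ← Multiset.coe_toList P.roots, Multiset.map_coe, Multiset.prod_coe, hl]
  funext j
  simp only [rootsToCoeffs, hprod, hPdef, charPoly_coeff, neg_neg]

lemma continuous_coeff_prod {ι : Type*} [DecidableEq ι] (s : Finset ι) (j : ℕ) :
    Continuous fun r : ι → ℂ => (∏ i ∈ s, (X - C (r i))).coeff j := by
  induction s using Finset.induction_on generalizing j with
  | empty => simpa using continuous_const
  | insert a s' ha ih =>
    have key : ∀ r : ι → ℂ, (∏ i ∈ insert a s', (X - C (r i))).coeff j
        = (X * (∏ i ∈ s', (X - C (r i)))).coeff j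
          - r a * (∏ i ∈ s', (X - C (r i))).coeff j := by
      intro r
      rw [Finset.prod_insert ha, sub_mul, coeff_sub, coeff_C_mul]
    simp only [key]
    match j with
    | 0 =>
      simp only [mul_coeff_zero, coeff_X_zero, zero_mul]
      exact (continuous_const).sub ((continuous_apply a).mul (ih 0))
    | Nat.succ n =>
      simp only [coeff_X_mul]
      exact (ih n).sub ((continuous_apply a).mul (ih (n+1)))

lemma continuous_rootsToCoeffs (m : ℕ) : Continuous (rootsToCoeffs m) := by
  refine continuous_pi fun j => ?_
  exact (continuous_coeff_prod Finset.univ (j : ℕ)).neg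

/-- Bound on roots in terms of the sup norm of the coefficient tuple. -/
lemma root_bound (m : ℕ) (M : Fin m → ℂ) (B : ℝ) (hB : ‖M‖ ≤ B) {z : ℂ}
    (hz : z ∈ (charPoly m M).roots) : ‖z‖ ≤ max 1 (m * B) := by
  by_contra hgt
  push_neg at hgt
  have h1 : (1:ℝ) < ‖z‖ := lt_of_le_of_lt (le_max_left _ _) hgt
  have hmB : (m:ℝ) * B < ‖z‖ := lt_of_le_of_lt (le_max_right _ _) hgt
  have heval : (charPoly m M).eval z = 0 := (mem_roots'.1 hz).2
  have hz0 : z ^ m = ∑ j : Fin m, M j * z ^ (j:ℕ) := by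
    have : eval z (X ^ m - ∑ j : Fin m, C (M j) * X ^ (j : ℕ)) = 0 := heval
    simp only [eval_sub, eval_pow, eval_X, eval_finset_sum, eval_mul, eval_C] at this
    exact sub_eq_zero.1 this
  have hb : ‖z‖ ^ m ≤ (m : ℝ) * B * ‖z‖ ^ (m - 1) := by
    calc ‖z‖ ^ m = ‖z ^ m‖ := by rw [norm_pow]
      _ = ‖∑ j : Fin m, M j * z ^ (j:ℕ)‖ := by rw [hz0]
      _ ≤ ∑ j : Fin m, ‖M j * z ^ (j:ℕ)‖ := norm_sum_le _ _
      _ ≤ ∑ _j : Fin m, B * ‖z‖ ^ (m - 1) := by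
          refine Finset.sum_le_sum fun j _ => ?_
          rw [norm_mul, norm_pow]
          have hMj : ‖M j‖ ≤ B := le_trans (norm_le_pi_norm M j) hB
          have hpow : ‖z‖ ^ (j:ℕ) ≤ ‖z‖ ^ (m - 1) :=
            pow_le_pow_right₀ h1.le (Nat.le_sub_one_of_lt j.2)
          exact mul_le_mul hMj hpow (by positivity) (le_trans (norm_nonneg _) hMj)
      _ = (m : ℝ) * B * ‖z‖ ^ (m - 1) := by
          rw [Finset.sum_const, Finset.card_univ, Fintype.card_fin, nsmul_eq_mul]; ring
  have hm1 : 1 ≤ m := by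
    by_contra h
    push_neg at h
    interval_cases m
    simp at hz0
  have hpowpos : (0:ℝ) < ‖z‖ ^ (m - 1) := pow_pos (lt_trans one_pos h1) _
  have : ‖z‖ ^ m = ‖z‖ * ‖z‖ ^ (m - 1) := by
    rw [← pow_succ']
    congr 1
    omega
  rw [this] at hb
  have := (mul_le_mul_iff_left₀ hpowpos).1 hb
  linarith

lemma isProperMap_rootsToCoeffs (m : ℕ) : IsProperMap (rootsToCoeffs m) := by
  rw [isProperMap_iff_isCompact_preimage]
  refine ⟨continuous_rootsToCoeffs m, fun K hK => ?_⟩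
  obtain ⟨B, hB⟩ := (isBounded_iff_forall_norm_le).1 hK.isBounded
  refine Metric.isCompact_of_isClosed_isBounded
    (hK.isClosed.preimage (continuous_rootsToCoeffs m)) ?_
  rw [isBounded_iff_forall_norm_le]
  refine ⟨max 1 (m * B), fun r hr => ?_⟩
  rw [pi_norm_le_iff_of_nonneg (le_trans zero_le_one (le_max_left _ _))]
  intro i
  apply root_bound m (rootsToCoeffs m r) B (hB _ hr)
  rw [charPoly_rootsToCoeffs, roots_prod_X_sub_C_fn]
  exact Multiset.mem_map_of_mem r (Finset.mem_univ i)

lemma maxReRoots_comp (m : ℕ) (hm : 1 ≤ m) (r : Fin m → ℂ) :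
    maxReRoots m (rootsToCoeffs m r)
      = Finset.univ.sup' (@Finset.univ_nonempty _ _ ⟨⟨0, hm⟩⟩) (fun i => (r i).re) := by
  haveI : Nonempty (Fin m) := ⟨⟨0, hm⟩⟩
  have hset : {z : ℂ | z ∈ (charPoly m (rootsToCoeffs m r)).roots} = Set.range r := by
    ext z
    rw [Set.mem_setOf_eq, charPoly_rootsToCoeffs, roots_prod_X_sub_C_fn]
    simp [Multiset.mem_map, List.mem_ofFn, eq_comm]
  rw [maxReRoots, hset, ← Set.range_comp, Finset.sup'_eq_csSup_image, Finset.coe_univ,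
    Set.image_univ]
  rfl

/-- for `m ≥ 1`, the function `Λ̄_m : ℂ^m → ℝ` is continuous on `ℂ^m`. -/
theorem maxReRoots_continuous (m : ℕ) (hm : 1 ≤ m) :
    Continuous (fun M : Fin m → ℂ => maxReRoots m M) := by
  haveI : Nonempty (Fin m) := ⟨⟨0, hm⟩⟩
  have hq : IsQuotientMap (rootsToCoeffs m) :=
    (isProperMap_rootsToCoeffs m).isClosedMap.isQuotientMap
      (continuous_rootsToCoeffs m) (rootsToCoeffs_surjective m hm)
  rw [hq.continuous_iff]
  have heq : (fun M : Fin m → ℂ => maxReRoots m M) ∘ rootsToCoeffs m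
      = fun r => Finset.univ.sup' Finset.univ_nonempty
          (fun i => (r i).re) :=
    funext fun r => maxReRoots_comp m hm r
  rw [heq]
  exact Continuous.finset_sup'_apply _
    (fun i _ => (Complex.continuous_re.comp (continuous_apply i)))
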